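/- Let d ≥ 1 be an integer and D ⊂ ℝ^d a nonempty bounded domain such that for some L > 0 the Lebesgue measure of {x ∈ ℝ^d : dist(x, ∂D) ≤ t} is at most L t for every t ∈ (0, 3√d]. For ε > 0 and a positive integer k with ε ≤ kε ≤ 1, set Q_{k,z} := εz + [−kε/2, kε/2]^d for z ∈ kℤ^d, N_k := {z ∈ kℤ^d : Q_{k,z} ∩ D ≠ ∅}, and N̊_k := {z ∈ N_k : Q_{k,z} ⊆ D and dist(Q_{k,z}, ∂D) ≥ ε}. Then there is a constant C = C(d) such that #(N_k \ N̊_k) ≤ C L (kε)^{1−d}. -/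

import Mathlib

open Metric Set Bornology MeasureTheory

noncomputable section

/-- The mesoscopic cube `Q_{k,z} := εz + [−kε/2, kε/2]^d`, for `z = k·y ∈ kℤ^d`. -/
def mesoCube (d : ℕ) (ε : ℝ) (k : ℕ) (y : Fin d → ℤ) : Set (EuclideanSpace ℝ (Fin d)) :=
  {x | ∀ i, |x i - ε * ((k : ℝ) * (y i : ℝ))| ≤ (k : ℝ) * ε / 2}

/-- `N_k := {z ∈ kℤ^d : Q_{k,z} ∩ D ≠ ∅}`. -/
def Nk (d : ℕ) (D : Set (EuclideanSpace ℝ (Fin d))) (ε : ℝ) (k : ℕ) : Set (Fin d → ℤ) :=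
  {y | (mesoCube d ε k y ∩ D).Nonempty}

/-- `N̊_k := {z ∈ N_k : Q_{k,z} ⊆ D and dist(Q_{k,z}, ∂D) ≥ ε}`. -/
def Nk0 (d : ℕ) (D : Set (EuclideanSpace ℝ (Fin d))) (ε : ℝ) (k : ℕ) : Set (Fin d → ℤ) :=
  {y ∈ Nk d D ε k | mesoCube d ε k y ⊆ D ∧
    ∀ x ∈ mesoCube d ε k y, ∀ p ∈ frontier D, ε ≤ dist x p}

/-- A preconnected set meeting both `D` and its complement meets the frontier of `D`. -/
lemma preconnected_inter_frontier {X : Type*} [TopologicalSpace X] {s D : Set X}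
    (hs : IsPreconnected s) (h1 : (s ∩ D).Nonempty) (h2 : (s \ D).Nonempty) :
    (s ∩ frontier D).Nonempty := by
  by_contra h
  rw [Set.not_nonempty_iff_eq_empty] at h
  have hsub : s ⊆ interior D ∪ (closure D)ᶜ := by
    intro x hx
    by_cases hxc : x ∈ closure D
    · by_cases hxi : x ∈ interior D
      · exact Or.inl hxi
      · exact absurd (Set.eq_empty_iff_forall_notMem.mp h x ⟨hx, hxc, hxi⟩) not_false
    · exact Or.inr hxc
  have h1' : (s ∩ interior D).Nonempty := by
    obtain ⟨x, hxs, hxD⟩ := h1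
    refine ⟨x, hxs, ?_⟩
    by_cases hxi : x ∈ interior D
    · exact hxi
    · exact absurd (Set.eq_empty_iff_forall_notMem.mp h x
        ⟨hxs, subset_closure hxD, hxi⟩) not_false
  have h2' : (s ∩ (closure D)ᶜ).Nonempty := by
    obtain ⟨x, hxs, hxD⟩ := h2
    refine ⟨x, hxs, ?_⟩
    intro hxc
    exact Set.eq_empty_iff_forall_notMem.mp h x
      ⟨hxs, hxc, fun hi => hxD (interior_subset hi)⟩
  obtain ⟨x, -, hxi, hxc⟩ := hs (interior D) (closure D)ᶜ isOpen_interior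
    isClosed_closure.isOpen_compl hsub h1' h2'
  exact hxc (subset_closure (interior_subset hxi))

lemma mesoCube_convex (d : ℕ) (ε : ℝ) (k : ℕ) (y : Fin d → ℤ) :
    Convex ℝ (mesoCube d ε k y) := by
  intro x hx z hz a b ha hb hab
  intro i
  have hx' := hx i
  have hz' := hz i
  have : (a • x + b • z) i = a * x i + b * z i := rfl
  rw [this]
  have key : a * x i + b * z i - ε * ((k : ℝ) * (y i : ℝ))
      = a * (x i - ε * ((k : ℝ) * (y i : ℝ))) + b * (z i - ε * ((k : ℝ) * (y i : ℝ))) := by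
    linear_combination (ε * ((k : ℝ) * (y i : ℝ))) * hab
  rw [key]
  calc |a * (x i - ε * ((k : ℝ) * (y i : ℝ))) + b * (z i - ε * ((k : ℝ) * (y i : ℝ)))|
      ≤ |a * (x i - ε * ((k : ℝ) * (y i : ℝ)))| + |b * (z i - ε * ((k : ℝ) * (y i : ℝ)))| :=
        abs_add_le _ _
    _ ≤ a * ((k : ℝ) * ε / 2) + b * ((k : ℝ) * ε / 2) := by
        rw [abs_mul, abs_mul, abs_of_nonneg ha, abs_of_nonneg hb]
        gcongr
    _ = (k : ℝ) * ε / 2 := by rw [← add_mul, hab, one_mul]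

/-- Diameter bound inside a mesoscopic cube. -/
lemma mesoCube_dist_le {d : ℕ} {ε : ℝ} {k : ℕ} {y : Fin d → ℤ}
    (hkε : 0 ≤ (k : ℝ) * ε)
    {x z : EuclideanSpace ℝ (Fin d)} (hx : x ∈ mesoCube d ε k y)
    (hz : z ∈ mesoCube d ε k y) :
    dist x z ≤ Real.sqrt d * ((k : ℝ) * ε) := by
  rw [EuclideanSpace.dist_eq]
  have hbound : ∀ i, dist (x i) (z i) ^ 2 ≤ ((k : ℝ) * ε) ^ 2 := by
    intro i
    have h1 := hx i
    have h2 := hz i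
    have : dist (x i) (z i) ≤ (k : ℝ) * ε := by
      rw [Real.dist_eq]
      calc |x i - z i| = |(x i - ε * ((k : ℝ) * (y i : ℝ)))
            - (z i - ε * ((k : ℝ) * (y i : ℝ)))| := by ring_nf
        _ ≤ |x i - ε * ((k : ℝ) * (y i : ℝ))| + |z i - ε * ((k : ℝ) * (y i : ℝ))| :=
            abs_sub _ _
        _ ≤ (k : ℝ) * ε / 2 + (k : ℝ) * ε / 2 := add_le_add h1 h2
        _ = (k : ℝ) * ε := by ring
    exact pow_le_pow_left₀ dist_nonneg this 2
  calc Real.sqrt (∑ i, dist (x i) (z i) ^ 2)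
      ≤ Real.sqrt (∑ _i : Fin d, ((k : ℝ) * ε) ^ 2) :=
        Real.sqrt_le_sqrt (Finset.sum_le_sum fun i _ => hbound i)
    _ = Real.sqrt ((d : ℝ) * ((k : ℝ) * ε) ^ 2) := by
        rw [Finset.sum_const, Finset.card_univ, Fintype.card_fin, nsmul_eq_mul]
    _ = Real.sqrt d * ((k : ℝ) * ε) := by
        rw [Real.sqrt_mul (by positivity), Real.sqrt_sq hkε]

/-- the number of boundary cubes of the mesoscopic covering is at most
`C L (kε)^{1−d}`, with `C = C(d)`. -/
theorem boundary_cubes_count (d : ℕ) (hd : 1 ≤ d) :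
    ∃ C > 0, ∀ (D : Set (EuclideanSpace ℝ (Fin d))),
      IsOpen D → D.Nonempty → IsBounded D →
      ∀ L > (0 : ℝ),
        (∀ t ∈ Set.Ioc (0 : ℝ) (3 * Real.sqrt d),
          volume {x : EuclideanSpace ℝ (Fin d) | infDist x (frontier D) ≤ t}
            ≤ ENNReal.ofReal (L * t)) →
      ∀ (ε : ℝ) (k : ℕ), 0 < ε → ε ≤ (k : ℝ) * ε → (k : ℝ) * ε ≤ 1 →
        (Nk d D ε k \ Nk0 d D ε k).Finite ∧
        ((Nk d D ε k \ Nk0 d D ε k).ncard : ℝ)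
          ≤ C * L * ((k : ℝ) * ε) ^ (1 - (d : ℝ)) := by
  have hd0 : (0 : ℝ) < d := by exact_mod_cast hd
  have hsd : (1 : ℝ) ≤ Real.sqrt d := by
    rw [show (1:ℝ) = Real.sqrt 1 by simp]
    exact Real.sqrt_le_sqrt (by exact_mod_cast hd)
  have hsd0 : (0 : ℝ) < Real.sqrt d := lt_of_lt_of_le one_pos hsd
  refine ⟨2 * Real.sqrt d, by positivity, ?_⟩
  intro D hDopen hDne hDbdd L hL hvol ε k hε hkε hkε1
  set κ : ℝ := (k : ℝ) * ε with hκ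
  have hκ0 : 0 < κ := lt_of_lt_of_le hε hkε
  set t : ℝ := 2 * Real.sqrt d * κ with ht
  have ht0 : 0 < t := by positivity
  have htle : t ≤ 3 * Real.sqrt d := by
    calc t = 2 * Real.sqrt d * κ := rfl
      _ ≤ 2 * Real.sqrt d * 1 := by gcongr
      _ ≤ 3 * Real.sqrt d := by nlinarith
  have hvolt := hvol t ⟨ht0, htle⟩
  set N : Set (EuclideanSpace ℝ (Fin d)) := {x | infDist x (frontier D) ≤ t} with hN
  set c : (Fin d → ℤ) → Fin d → ℝ := fun y i => ε * ((k : ℝ) * (y i : ℝ)) with hc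
  set B : (Fin d → ℤ) → Set (EuclideanSpace ℝ (Fin d)) :=
    fun y => {x | ∀ i, |x i - c y i| < κ / 2} with hB
  -- B y is the open cube, contained in the closed cube
  have hBsub : ∀ y, B y ⊆ mesoCube d ε k y :=
    fun y x hx i => le_of_lt (hx i)
  -- each B y is open hence measurable
  have hBopen : ∀ y, IsOpen (B y) := by
    intro y
    have : B y = ⋂ i, (fun x : EuclideanSpace ℝ (Fin d) => x i) ⁻¹'
        (Set.Ioo (c y i - κ / 2) (c y i + κ / 2)) := by
      ext x
      have hME : ∀ (x : EuclideanSpace ℝ (Fin d)) (i : Fin d),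
          (MeasurableEquiv.toLp 2 (Fin d → ℝ)).symm x i = x i := fun _ _ => rfl
      simp only [hB, Set.mem_setOf_eq, Set.mem_iInter, Set.mem_preimage, Set.mem_Ioo,
        abs_sub_lt_iff, hME]
      constructor
      · intro h i; have := h i; constructor <;> linarith [(h i).1, (h i).2]
      · intro h i; have := h i; constructor <;> linarith [(h i).1, (h i).2]
    rw [this]
    exact isOpen_iInter_of_finite fun i =>
      IsOpen.preimage ((EuclideanSpace.proj (𝕜 := ℝ) i).continuous) isOpen_Ioo
  -- volume of each B y
  have hBvol : ∀ y, volume (B y) = ENNReal.ofReal (κ ^ d) := by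
    intro y
    have heq : B y = (MeasurableEquiv.toLp 2 (Fin d → ℝ)).symm ⁻¹'
        (Set.pi Set.univ fun i => Set.Ioo (c y i - κ / 2) (c y i + κ / 2)) := by
      ext x
      have hME : ∀ (x : EuclideanSpace ℝ (Fin d)) (i : Fin d),
          (MeasurableEquiv.toLp 2 (Fin d → ℝ)).symm x i = x i := fun _ _ => rfl
      simp only [hB, Set.mem_setOf_eq, Set.mem_preimage, Set.mem_pi, Set.mem_univ,
        forall_true_left, Set.mem_Ioo, abs_sub_lt_iff, hME]
      constructor
      · intro h i; constructor <;> linarith [(h i).1, (h i).2]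
      · intro h i; constructor <;> linarith [(h i).1, (h i).2]
    rw [heq, (EuclideanSpace.volume_preserving_symm_measurableEquiv_toLp (Fin d)).measure_preimage
      ((MeasurableSet.univ_pi fun i => measurableSet_Ioo).nullMeasurableSet)]
    rw [volume_pi_pi]
    have : ∀ i : Fin d, volume (Set.Ioo (c y i - κ / 2) (c y i + κ / 2))
        = ENNReal.ofReal κ := by
      intro i
      rw [Real.volume_Ioo]
      congr 1
      ring
    simp_rw [this]
    rw [Finset.prod_const, Finset.card_univ, Fintype.card_fin,
      ← ENNReal.ofReal_pow (le_of_lt hκ0)]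
  -- pairwise disjointness of the open cubes
  have hBdisj : ∀ y y' : Fin d → ℤ, y ≠ y' → Disjoint (B y) (B y') := by
    intro y y' hne
    rw [Set.disjoint_left]
    intro x hx hx'
    obtain ⟨i, hi⟩ : ∃ i, y i ≠ y' i := by
      by_contra h
      push_neg at h
      exact hne (funext h)
    have h1 : (1 : ℝ) ≤ |(y i : ℝ) - (y' i : ℝ)| := by
      have : y i - y' i ≠ 0 := sub_ne_zero_of_ne hi
      have h2 : (1 : ℤ) ≤ |y i - y' i| := Int.one_le_abs this
      exact_mod_cast h2
    have hcc : κ ≤ |c y i - c y' i| := by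
      have : c y i - c y' i = ε * (k : ℝ) * ((y i : ℝ) - (y' i : ℝ)) := by
        simp only [hc]; ring
      rw [this, abs_mul, abs_of_nonneg (by positivity : (0:ℝ) ≤ ε * (k:ℝ))]
      calc κ = ε * (k : ℝ) * 1 := by rw [hκ]; ring
        _ ≤ ε * (k : ℝ) * |(y i : ℝ) - (y' i : ℝ)| := by
            apply mul_le_mul_of_nonneg_left h1 (by positivity)
    have ha := hx i
    have hb := hx' i
    have : |c y i - c y' i| < κ := by
      calc |c y i - c y' i| = |(x i - c y' i) - (x i - c y i)| := by ring_nf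
        _ ≤ |x i - c y' i| + |x i - c y i| := abs_sub _ _
        _ < κ / 2 + κ / 2 := add_lt_add hb ha
        _ = κ := by ring
    linarith
  -- boundary cubes lie in the t-neighborhood of the frontier
  have hkey : ∀ y ∈ Nk d D ε k \ Nk0 d D ε k, mesoCube d ε k y ⊆ N := by
    intro y hy x hx
    obtain ⟨hy1, hy2⟩ := hy
    obtain ⟨a, haQ, haD⟩ := hy1
    have hκnn : (0:ℝ) ≤ κ := le_of_lt hκ0
    have hnot : ¬(mesoCube d ε k y ⊆ D ∧
        ∀ x ∈ mesoCube d ε k y, ∀ p ∈ frontier D, ε ≤ dist x p) := by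
      intro hcontra
      exact hy2 ⟨⟨a, haQ, haD⟩, hcontra⟩
    rw [not_and_or] at hnot
    rcases hnot with hsub | hdist
    · -- cube meets complement of D, so it meets the frontier
      rw [Set.not_subset] at hsub
      obtain ⟨x₀, hx₀Q, hx₀D⟩ := hsub
      obtain ⟨p, hpQ, hpF⟩ := preconnected_inter_frontier
        (mesoCube_convex d ε k y).isPreconnected ⟨a, haQ, haD⟩ ⟨x₀, hx₀Q, hx₀D⟩
      have : infDist x (frontier D) ≤ dist x p := infDist_le_dist_of_mem hpF
      have hdxp : dist x p ≤ Real.sqrt d * κ := mesoCube_dist_le hκnn hx hpQ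
      show infDist x (frontier D) ≤ t
      calc infDist x (frontier D) ≤ dist x p := this
        _ ≤ Real.sqrt d * κ := hdxp
        _ ≤ 2 * Real.sqrt d * κ := by nlinarith
    · -- some point of the cube is ε-close to the frontier
      push_neg at hdist
      obtain ⟨x₀, hx₀Q, p, hpF, hdp⟩ := hdist
      have hdxx0 : dist x x₀ ≤ Real.sqrt d * κ := mesoCube_dist_le hκnn hx hx₀Q
      show infDist x (frontier D) ≤ t
      calc infDist x (frontier D) ≤ dist x p := infDist_le_dist_of_mem hpF
        _ ≤ dist x x₀ + dist x₀ p := dist_triangle _ _ _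
        _ ≤ Real.sqrt d * κ + ε := by linarith [le_of_lt hdp]
        _ ≤ Real.sqrt d * κ + κ := by linarith [hkε]
        _ ≤ 2 * Real.sqrt d * κ := by nlinarith
  -- N is measurable
  have hNmeas : MeasurableSet N := by
    have : IsClosed N := by
      have : N = (fun x => infDist x (frontier D)) ⁻¹' Set.Iic t := rfl
      rw [this]
      exact IsClosed.preimage (continuous_infDist_pt _) isClosed_Iic
    exact this.measurableSet
  -- the counting bound for finite subsets
  have hcount : ∀ F : Finset (Fin d → ℤ), ↑F ⊆ Nk d D ε k \ Nk0 d D ε k →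
      (F.card : ℝ) * κ ^ d ≤ L * t := by
    intro F hF
    have hdisjF : (↑F : Set (Fin d → ℤ)).PairwiseDisjoint B :=
      fun y _ y' _ hne => hBdisj y y' hne
    have hmeasF : ∀ y ∈ F, MeasurableSet (B y) := fun y _ => (hBopen y).measurableSet
    have hunion : (⋃ y ∈ F, B y) ⊆ N := by
      intro x hx
      simp only [Set.mem_iUnion] at hx
      obtain ⟨y, hyF, hxB⟩ := hx
      exact hkey y (hF hyF) (hBsub y hxB)
    have hvol2 : volume (⋃ y ∈ F, B y) = (F.card : ENNReal) * ENNReal.ofReal (κ ^ d) := by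
      rw [measure_biUnion_finset hdisjF hmeasF]
      simp_rw [hBvol]
      rw [Finset.sum_const, nsmul_eq_mul]
    have hle : (F.card : ENNReal) * ENNReal.ofReal (κ ^ d) ≤ ENNReal.ofReal (L * t) := by
      rw [← hvol2]
      exact le_trans (measure_mono hunion) hvolt
    have hENN : ENNReal.ofReal ((F.card : ℝ) * κ ^ d) ≤ ENNReal.ofReal (L * t) := by
      rw [ENNReal.ofReal_mul (by positivity)]
      rwa [ENNReal.ofReal_natCast]
    have := (ENNReal.ofReal_le_ofReal_iff (by positivity)).mp hENN
    exact this
  -- finiteness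
  have hfin : (Nk d D ε k \ Nk0 d D ε k).Finite := by
    by_contra hinf
    have hinf' : (Nk d D ε k \ Nk0 d D ε k).Infinite := hinf
    obtain ⟨s, hs, hsfin, hscard⟩ := hinf'.exists_subset_ncard_eq (⌈L * t / κ ^ d⌉₊ + 1)
    have hF := hcount hsfin.toFinset (by rwa [Set.Finite.coe_toFinset])
    rw [Set.ncard_eq_toFinset_card s hsfin] at hscard
    rw [hscard] at hF
    have hκd : (0:ℝ) < κ ^ d := by positivity
    have h1 : ((⌈L * t / κ ^ d⌉₊ + 1 : ℕ) : ℝ) ≤ L * t / κ ^ d := by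
      rw [le_div_iff₀ hκd]
      exact hF
    have h2 : L * t / κ ^ d ≤ ⌈L * t / κ ^ d⌉₊ := Nat.le_ceil _
    have h3 : ((⌈L * t / κ ^ d⌉₊ + 1 : ℕ) : ℝ) = (⌈L * t / κ ^ d⌉₊ : ℝ) + 1 := by push_cast; ring
    linarith
  refine ⟨hfin, ?_⟩
  -- the cardinality bound
  have hF := hcount hfin.toFinset (by rw [Set.Finite.coe_toFinset])
  rw [Set.ncard_eq_toFinset_card _ hfin]
  have hκd : (0:ℝ) < κ ^ d := by positivity
  have hrpow : κ ^ (1 - (d : ℝ)) = κ / κ ^ d := by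
    rw [Real.rpow_sub hκ0, Real.rpow_one, Real.rpow_natCast]
  have hre : 2 * Real.sqrt d * L * (κ / κ ^ d) = (L * (2 * Real.sqrt d) * κ) / κ ^ d := by
    ring
  rw [hrpow, hre, le_div_iff₀ hκd]
  calc (hfin.toFinset.card : ℝ) * κ ^ d ≤ L * t := hF
    _ = L * (2 * Real.sqrt d) * κ := by rw [ht]; ring
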